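/- Suppose R contains ℚ (R is a ℚ-algebra), let c ∈ R be an element that is not a zero divisor, and let p ∈ R[X_1,…,X_N] be a nonzero homogeneous polynomial of degree d. If M_{jk}(p) lies in the ideal generated by X·X − c for all pairs of distinct indices j, k ∈ {1,…,N}, then d is even and p = a·(X·X)^{d/2} for some a ∈ R. -/

import Mathlib

open MvPolynomial

/-- The rotation generator `M_{jk} p = X_j ∂_k p − X_k ∂_j p`. -/
noncomputable def rot {R : Type*} [CommRing R] {N : ℕ} (j k : Fin N)
    (p : MvPolynomial (Fin N) R) : MvPolynomial (Fin N) R :=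
  X j * pderiv k p - X k * pderiv j p

/-- The Laplacian `Δ p = Σ_j ∂_j² p`. -/
noncomputable def lap {R : Type*} [CommRing R] {N : ℕ}
    (p : MvPolynomial (Fin N) R) : MvPolynomial (Fin N) R :=
  ∑ j, pderiv j (pderiv j p)

/-- The polynomial `X·X = X_1² + ⋯ + X_N²`. -/
noncomputable def XX (R : Type*) [CommRing R] (N : ℕ) : MvPolynomial (Fin N) R :=
  ∑ j, X j ^ 2

namespace Stmt11Aux
variable {R : Type*} [CommRing R] {N : ℕ}

variable {R : Type*} [CommRing R] {N : ℕ}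

lemma degree_add (a b : Fin N →₀ ℕ) : (a + b).degree = a.degree + b.degree := by
  simp [Finsupp.degree_eq_weight_one, map_add]

lemma XX_isHomogeneous : (XX R N).IsHomogeneous 2 :=
  IsHomogeneous.sum _ _ _ fun i _ => isHomogeneous_X_pow i 2

lemma X_mul_eq_zero {i : Fin N} {f : MvPolynomial (Fin N) R} (h : X i * f = 0) : f = 0 := by
  ext m
  have := congrArg (coeff (Finsupp.single i 1 + m)) h
  simpa [coeff_X_mul] using this

lemma XX_mul_eq_zero (hN : 1 ≤ N) {q : MvPolynomial (Fin N) R} (h : XX R N * q = 0) : q = 0 := by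
  obtain ⟨M, rfl⟩ : ∃ M, N = M + 1 := ⟨N - 1, by omega⟩
  have hXX : (finSuccEquiv R M) (XX R (M+1)) = Polynomial.X ^ 2 + Polynomial.C (XX R M) := by
    rw [XX, Fin.sum_univ_succ, map_add, map_pow, finSuccEquiv_X_zero]
    congr 1
    rw [map_sum, XX, map_sum]
    refine Finset.sum_congr rfl fun i _ => ?_
    rw [map_pow, finSuccEquiv_X_succ, map_pow]
  have h2 : (Polynomial.X ^ 2 + Polynomial.C (XX R M)) * (finSuccEquiv R M) q = 0 := by
    rw [← hXX, ← map_mul, h, map_zero]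
  have hm : (Polynomial.X ^ 2 + Polynomial.C (XX R M)).Monic :=
    Polynomial.monic_X_pow_add (lt_of_le_of_lt Polynomial.degree_C_le (by norm_num))
  have := hm.mul_right_eq_zero_iff.mp h2
  exact (finSuccEquiv R M).injective (by rw [this, map_zero])



variable {R : Type*} [CommRing R] {N : ℕ}

lemma hc_mul_XX (a : MvPolynomial (Fin N) R) (n : ℕ) :
    homogeneousComponent (n + 2) (a * XX R N) = homogeneousComponent n a * XX R N := by
  ext m
  rw [coeff_homogeneousComponent, coeff_mul, coeff_mul]
  split_ifs with hm
  · refine Finset.sum_congr rfl fun uv huv => ?_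
    rw [Finset.HasAntidiagonal.mem_antidiagonal] at huv
    rw [coeff_homogeneousComponent]
    by_cases hv : coeff uv.2 (XX R N) = 0
    · simp [hv]
    · have hdeg2 : uv.2.degree = 2 := by
        by_contra hne
        exact hv (XX_isHomogeneous.coeff_eq_zero hne)
      have hmd : m.degree = uv.1.degree + 2 := by
        rw [← huv, degree_add, hdeg2]
      rw [if_pos (by omega : uv.1.degree = n)]
  · symm
    refine Finset.sum_eq_zero fun uv huv => ?_
    rw [Finset.HasAntidiagonal.mem_antidiagonal] at huv
    rw [coeff_homogeneousComponent]
    by_cases hv : coeff uv.2 (XX R N) = 0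
    · rw [hv, mul_zero]
    · have hdeg2 : uv.2.degree = 2 := by
        by_contra hne
        exact hv (XX_isHomogeneous.coeff_eq_zero hne)
      have hmd : m.degree = uv.1.degree + 2 := by
        rw [← huv, degree_add, hdeg2]
      rw [if_neg (by omega : ¬ uv.1.degree = n), zero_mul]

lemma hc_mul_XX_lt (a : MvPolynomial (Fin N) R) {m : ℕ} (hm : m < 2) :
    homogeneousComponent m (a * XX R N) = 0 := by
  ext m'
  rw [coeff_homogeneousComponent, coeff_zero]
  split_ifs with h
  · rw [coeff_mul]
    refine Finset.sum_eq_zero fun uv huv => ?_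
    rw [Finset.HasAntidiagonal.mem_antidiagonal] at huv
    by_cases hv : coeff uv.2 (XX R N) = 0
    · rw [hv, mul_zero]
    · have hdeg2 : uv.2.degree = 2 := by
        by_contra hne
        exact hv (XX_isHomogeneous.coeff_eq_zero hne)
      have : m'.degree = uv.1.degree + 2 := by rw [← huv, degree_add, hdeg2]
      omega
  · rfl



variable {R : Type*} [CommRing R] {N : ℕ}

lemma degree_single (i : Fin N) : (Finsupp.single i 1).degree = 1 := by
  rw [Finsupp.degree_apply, Finsupp.support_single_ne_zero _ one_ne_zero, Finset.sum_singleton,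
    Finsupp.single_eq_same]

lemma X_mul_monomial' (i : Fin N) (t : Fin N →₀ ℕ) (b : R) :
    X i * monomial t b = monomial (Finsupp.single i 1 + t) b := by
  rw [show (X i : MvPolynomial (Fin N) R) = monomial (Finsupp.single i 1) 1 from rfl,
    monomial_mul, one_mul]

lemma sum_X_mul_pderiv_monomial (m : Fin N →₀ ℕ) (a : R) :
    ∑ i, X i * pderiv i (monomial m a) = m.degree • monomial m a := by
  have step : ∀ i : Fin N, X i * pderiv i (monomial m a) = (m i) • monomial m a := by
    intro i
    rw [pderiv_monomial]
    by_cases h : m i = 0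
    · simp [h]
    · have hle : Finsupp.single i 1 ≤ m := by
        rw [Finsupp.single_le_iff]; omega
      rw [X_mul_monomial', add_tsub_cancel_of_le hle, smul_monomial, nsmul_eq_mul, mul_comm]
  rw [Finset.sum_congr rfl fun i _ => step i, ← Finset.sum_smul]
  congr 1
  rw [Finsupp.degree_apply]
  exact (Finset.sum_subset (Finset.subset_univ _) (by
    intro x _ hx
    exact Finsupp.notMem_support_iff.mp hx)).symm

lemma euler {p : MvPolynomial (Fin N) R} {d : ℕ} (hp : p.IsHomogeneous d) :
    ∑ i, X i * pderiv i p = d • p := by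
  calc ∑ i, X i * pderiv i p
      = ∑ i, ∑ m ∈ p.support, X i * pderiv i (monomial m (coeff m p)) := by
        refine Finset.sum_congr rfl fun i _ => ?_
        rw [← Finset.mul_sum, ← map_sum, support_sum_monomial_coeff]
    _ = ∑ m ∈ p.support, ∑ i, X i * pderiv i (monomial m (coeff m p)) := Finset.sum_comm
    _ = ∑ m ∈ p.support, d • monomial m (coeff m p) := by
        refine Finset.sum_congr rfl fun m hm => ?_
        rw [sum_X_mul_pderiv_monomial]
        congr 1
        rw [Finsupp.degree_eq_weight_one]
        exact hp (mem_support_iff.mp hm)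
    _ = d • p := by rw [← Finset.smul_sum, support_sum_monomial_coeff]

lemma pderiv_comm (i j : Fin N) (p : MvPolynomial (Fin N) R) :
    pderiv i (pderiv j p) = pderiv j (pderiv i p) := by
  induction p using MvPolynomial.induction_on' with
  | add p q hp hq => simp only [map_add, hp, hq]
  | monomial m a =>
    rcases eq_or_ne i j with rfl | hij
    · rfl
    · simp only [pderiv_monomial]
      have h1 : m - Finsupp.single j 1 - Finsupp.single i 1
          = m - Finsupp.single i 1 - Finsupp.single j 1 := by
        ext x; simp only [Finsupp.coe_tsub, Pi.sub_apply]; omega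
      have h2 : ((m - Finsupp.single j 1 : Fin N →₀ ℕ)) i = m i := by
        rw [Finsupp.tsub_apply, Finsupp.single_eq_of_ne' (Ne.symm hij), tsub_zero]
      have h3 : ((m - Finsupp.single i 1 : Fin N →₀ ℕ)) j = m j := by
        rw [Finsupp.tsub_apply, Finsupp.single_eq_of_ne' hij, tsub_zero]
      rw [h1, h2, h3]
      ring_nf

lemma pderiv_isHomogeneous {p : MvPolynomial (Fin N) R} {d : ℕ}
    (hp : p.IsHomogeneous (d+1)) (i : Fin N) : (pderiv i p).IsHomogeneous d := by
  have hrw : pderiv i p = ∑ m ∈ p.support, pderiv i (monomial m (coeff m p)) := by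
    rw [← map_sum, support_sum_monomial_coeff]
  rw [hrw]
  refine IsHomogeneous.sum _ _ _ fun m hm => ?_
  rw [pderiv_monomial]
  by_cases h : m i = 0
  · rw [h, Nat.cast_zero, mul_zero, monomial_zero]
    exact isHomogeneous_zero _ _ _
  · apply isHomogeneous_monomial
    have hle : Finsupp.single i 1 ≤ m := by rw [Finsupp.single_le_iff]; omega
    have hdm : m.degree = d + 1 := by
      rw [Finsupp.degree_eq_weight_one]; exact hp (mem_support_iff.mp hm)
    have := degree_add (m - Finsupp.single i 1) (Finsupp.single i 1)
    rw [tsub_add_cancel_of_le hle, degree_single, hdm] at this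
    omega

lemma X_dvd_of_coeff {i : Fin N} {f : MvPolynomial (Fin N) R}
    (h : ∀ m : Fin N →₀ ℕ, m i = 0 → coeff m f = 0) : ∃ g, f = X i * g := by
  refine ⟨f.divMonomial (Finsupp.single i 1), ?_⟩
  have hmod : f.modMonomial (Finsupp.single i 1) = 0 := by
    ext m
    rw [coeff_zero]
    by_cases hle : Finsupp.single i 1 ≤ m
    · exact coeff_modMonomial_of_le f hle
    · rw [coeff_modMonomial_of_not_le f hle]
      apply h
      rw [Finsupp.single_le_iff] at hle
      omega
  conv_lhs => rw [← divMonomial_add_modMonomial f (Finsupp.single i 1)]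
  rw [hmod, add_zero]
  rfl



variable {R : Type*} [CommRing R] {N : ℕ}

lemma homog_in_span {c : R} (hc : c ∈ nonZeroDivisors R) (hN : 1 ≤ N)
    {f : MvPolynomial (Fin N) R} {d : ℕ} (hf : f.IsHomogeneous d)
    (hmem : f ∈ Ideal.span {XX R N - C c}) : f = 0 := by
  obtain ⟨q, hq⟩ := Ideal.mem_span_singleton.mp hmem
  have hf' : f = q * XX R N - C c * q := by rw [hq]; ring
  have hcreg : ∀ r : MvPolynomial (Fin N) R, C c * r = 0 → r = 0 := by
    intro r hr
    ext m
    have := congrArg (coeff m) hr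
    rw [coeff_C_mul, coeff_zero] at this
    rw [coeff_zero]
    exact hc.2 _ (by rw [mul_comm]; exact this)
  have hcomp : ∀ n, homogeneousComponent n f = if n = d then f else 0 :=
    fun n => homogeneousComponent_of_mem ((mem_homogeneousSubmodule d f).mpr hf)
  have hrel : ∀ n, homogeneousComponent n f
      = homogeneousComponent n (q * XX R N) - C c * homogeneousComponent n q := by
    intro n
    rw [hf', map_sub, homogeneousComponent_C_mul]
  have hdown : ∀ i, ∀ m, d ≤ m + 1 → q.totalDegree < m + i → homogeneousComponent m q = 0 := by
    intro i
    induction i with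
    | zero => exact fun m _ hlt => homogeneousComponent_eq_zero m q (by omega)
    | succ i ih =>
      intro m hdm hlt
      have h2 : homogeneousComponent (m+2) q = 0 := ih (m+2) (by omega) (by omega)
      have h3 : homogeneousComponent (m+2) f = 0 := by rw [hcomp, if_neg (by omega)]
      rw [hrel, hc_mul_XX q m, h2, mul_zero, sub_zero] at h3
      exact XX_mul_eq_zero hN (by rw [mul_comm]; exact h3)
  have hup : ∀ m, m < d → homogeneousComponent m q = 0 := by
    intro m
    induction m using Nat.strong_induction_on with
    | _ m ihm =>
    intro hmd
    have h3 : homogeneousComponent m f = 0 := by rw [hcomp, if_neg (by omega)]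
    rw [hrel] at h3
    have h4 : homogeneousComponent m (q * XX R N) = 0 := by
      rcases Nat.lt_or_ge m 2 with hm2 | hm2
      · exact hc_mul_XX_lt q hm2
      · obtain ⟨n, rfl⟩ : ∃ n, m = n + 2 := ⟨m - 2, by omega⟩
        rw [hc_mul_XX q n, ihm n (by omega) (by omega), zero_mul]
    rw [h4, zero_sub, neg_eq_zero] at h3
    exact hcreg _ h3
  have hq0 : q = 0 := by
    conv_lhs => rw [← sum_homogeneousComponent q]
    refine Finset.sum_eq_zero fun n _ => ?_
    rcases Nat.lt_or_ge n d with hn | hn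
    · exact hup n hn
    · exact hdown (q.totalDegree + 1) n (by omega) (by omega)
  rw [hq, hq0, mul_zero]

lemma exists_G (hN : 2 ≤ N) {p : MvPolynomial (Fin N) R}
    (hrot : ∀ j k : Fin N, j ≠ k → rot j k p = 0) :
    ∃ G, ∀ k, pderiv k p = X k * G := by
  have hswap : ∀ j k : Fin N, j ≠ k → X j * pderiv k p = X k * pderiv j p := by
    intro j k hjk
    have := hrot j k hjk
    rw [rot, sub_eq_zero] at this
    exact this
  have hdvd : ∀ k : Fin N, ∃ g, pderiv k p = X k * g := by
    intro k
    obtain ⟨j, hj⟩ : ∃ j : Fin N, j ≠ k := by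
      rcases eq_or_ne k ⟨0, by omega⟩ with rfl | hk
      · exact ⟨⟨1, by omega⟩, by simp [Fin.ext_iff]⟩
      · exact ⟨⟨0, by omega⟩, fun hcon => hk hcon.symm⟩
    apply X_dvd_of_coeff (i := k)
    intro m hm
    have e1 : coeff (Finsupp.single j 1 + m) (X j * pderiv k p) = coeff m (pderiv k p) :=
      coeff_X_mul m j (pderiv k p)
    rw [hswap j k hj] at e1
    rw [← e1]
    classical
    rw [coeff_X_mul' (Finsupp.single j 1 + m) k (pderiv j p)]
    rw [if_neg]
    rw [Finsupp.mem_support_iff]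
    simp only [Finsupp.add_apply, Finsupp.single_eq_of_ne' hj, hm]
    omega
  choose g hg using hdvd
  have huniq : ∀ j k : Fin N, j ≠ k → g j = g k := by
    intro j k hjk
    have h1 := hswap j k hjk
    rw [hg j, hg k] at h1
    have h2 : X j * (X k * (g k - g j)) = 0 := by linear_combination h1
    have h3 := X_mul_eq_zero h2
    have h4 := X_mul_eq_zero h3
    rw [sub_eq_zero] at h4
    exact h4.symm
  refine ⟨g ⟨0, by omega⟩, fun k => ?_⟩
  rcases eq_or_ne k ⟨0, by omega⟩ with rfl | hk
  · exact hg _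
  · rw [hg k, huniq k ⟨0, by omega⟩ hk]



variable {R : Type*} [CommRing R] {N : ℕ}

lemma eq_C_of_isHomogeneous_zero {p : MvPolynomial (Fin N) R} (hp : p.IsHomogeneous 0) :
    p = C (coeff 0 p) := by
  have h := homogeneousComponent_of_mem (m := 0) ((mem_homogeneousSubmodule 0 p).mpr hp)
  rw [if_pos rfl] at h
  exact h.symm.trans (homogeneousComponent_zero p)

lemma key {R : Type*} [CommRing R] [Algebra ℚ R] {N : ℕ} (hN : 2 ≤ N) :
    ∀ d : ℕ, ∀ p : MvPolynomial (Fin N) R, p ≠ 0 → p.IsHomogeneous d →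
    (∀ j k : Fin N, j ≠ k → rot j k p = 0) →
    Even d ∧ ∃ a : R, p = C a * XX R N ^ (d / 2) := by
  intro d
  induction d using Nat.strong_induction_on with
  | _ d IH =>
  intro p hp hhom hrot
  rcases d with _ | d'
  · exact ⟨Even.zero, coeff 0 p, by
      rw [Nat.zero_div, pow_zero, mul_one]
      exact eq_C_of_isHomogeneous_zero hhom⟩
  -- d = d' + 1 ≥ 1
  obtain ⟨G, hG⟩ := exists_G hN hrot
  have heuler : (d' + 1) • p = XX R N * G := by
    rw [← euler hhom, XX, Finset.sum_mul]
    refine Finset.sum_congr rfl fun i _ => ?_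
    rw [hG i, ← mul_assoc, sq]
  rcases d' with _ | e
  · -- d = 1 : contradiction
    exfalso
    have hpG : p = G * XX R N := by
      have := heuler
      simp only [zero_add, one_smul] at this
      rw [this, mul_comm]
    have h1 : homogeneousComponent 1 p = p := by
      rw [homogeneousComponent_of_mem ((mem_homogeneousSubmodule 1 p).mpr hhom), if_pos rfl]
    rw [hpG] at h1
    rw [hc_mul_XX_lt G (by norm_num)] at h1
    exact hp (by rw [hpG, ← h1])
  -- d = e + 2
  set r : R := algebraMap ℚ R (((e : ℚ) + 2))⁻¹ with hr_def
  have hrC : ((e + 1 + 1 : ℕ) : R) * r = 1 := by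
    rw [hr_def, ← map_natCast (algebraMap ℚ R) (e + 1 + 1), ← map_mul]
    rw [show (((e:ℕ) + 1 + 1 : ℕ) : ℚ) = ((e : ℚ) + 2) by push_cast; ring]
    rw [mul_inv_cancel₀ (by positivity), map_one]
  set G' : MvPolynomial (Fin N) R := C r * G with hG'_def
  have hpG : p = XX R N * G' := by
    have h1 : C r * ((e + 1 + 1 : ℕ) • p) = p := by
      rw [nsmul_eq_mul, ← mul_assoc,
        show ((e + 1 + 1 : ℕ) : MvPolynomial (Fin N) R) = C ((e + 1 + 1 : ℕ) : R) by
          rw [map_natCast],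
        ← C_mul, mul_comm r, hrC, C_1, one_mul]
    rw [← h1, heuler, hG'_def]
    ring
  have hG'comp : ∀ n, n ≠ e → homogeneousComponent n G' = 0 := by
    intro n hne
    have h1 : homogeneousComponent (n + 2) p = 0 := by
      rw [homogeneousComponent_of_mem ((mem_homogeneousSubmodule (e+1+1) p).mpr hhom),
        if_neg (by omega)]
    rw [hpG, mul_comm, hc_mul_XX G' n] at h1
    exact XX_mul_eq_zero (by omega) (by rw [mul_comm]; exact h1)
  have hG'hom : G'.IsHomogeneous e := by
    rw [← mem_homogeneousSubmodule]
    have hsum : (∑ n ∈ Finset.range (G'.totalDegree + 1), homogeneousComponent n G')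
        ∈ homogeneousSubmodule (Fin N) R e := by
      refine Submodule.sum_mem _ fun n _ => ?_
      rcases eq_or_ne n e with rfl | hne
      · exact homogeneousComponent_mem n G'
      · rw [hG'comp n hne]
        exact Submodule.zero_mem _
    rwa [sum_homogeneousComponent] at hsum
  have hG'ne : G' ≠ 0 := by
    intro h0
    exact hp (by rw [hpG, h0, mul_zero])
  have hrotG' : ∀ j k : Fin N, j ≠ k → rot j k G' = 0 := by
    intro j k hjk
    have e1 : pderiv j (pderiv k p) = X k * pderiv j G := by
      rw [hG k, pderiv_mul, pderiv_X_of_ne hjk.symm, zero_mul, zero_add]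
    have e2 : pderiv k (pderiv j p) = X j * pderiv k G := by
      rw [hG j, pderiv_mul, pderiv_X_of_ne hjk, zero_mul, zero_add]
    have h1 : X k * pderiv j G = X j * pderiv k G := by
      rw [← e1, ← e2, pderiv_comm]
    rw [rot, hG'_def, pderiv_C_mul, pderiv_C_mul]
    linear_combination (-(C r)) * h1
  obtain ⟨hEven, a, ha⟩ := IH e (by omega) G' hG'ne hG'hom hrotG'
  refine ⟨?_, a, ?_⟩
  · obtain ⟨t, ht⟩ := hEven
    exact ⟨t + 1, by omega⟩
  · rw [hpG, ha, show (e + 1 + 1) / 2 = e / 2 + 1 by omega, pow_succ]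
    ring


lemma rot_isHomogeneous {p : MvPolynomial (Fin N) R} {d : ℕ} (hhom : p.IsHomogeneous (d+1))
    (j k : Fin N) : (rot j k p).IsHomogeneous (d+1) := by
  have h1 : (X j * pderiv k p).IsHomogeneous (1 + d) :=
    (isHomogeneous_X R j).mul (pderiv_isHomogeneous hhom k)
  have h2 : (X k * pderiv j p).IsHomogeneous (1 + d) :=
    (isHomogeneous_X R k).mul (pderiv_isHomogeneous hhom j)
  have h3 := h1.sub h2
  rw [Nat.add_comm 1 d] at h3
  exact h3

end Stmt11Aux

open Stmt11Aux in
/-- over a ℚ-algebra, if `c` is not a zero divisor, `p` is nonzero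
homogeneous of degree `d`, and all `M_{jk} p` lie in the ideal generated by `X·X − c`,
then `d` is even and `p = a·(X·X)^{d/2}`. -/
theorem stmt11 {R : Type*} [CommRing R] [Algebra ℚ R] {N : ℕ} (hN : 2 ≤ N)
    (c : R) (hc : c ∈ nonZeroDivisors R)
    (d : ℕ) (p : MvPolynomial (Fin N) R) (hp : p ≠ 0) (hhom : p.IsHomogeneous d)
    (h : ∀ j k : Fin N, j ≠ k → rot j k p ∈ Ideal.span {XX R N - C c}) :
    Even d ∧ ∃ a : R, p = C a * XX R N ^ (d / 2) := by
  rcases Nat.eq_zero_or_pos d with rfl | hd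
  · exact ⟨Even.zero, coeff 0 p, by
      rw [Nat.zero_div, pow_zero, mul_one]
      exact eq_C_of_isHomogeneous_zero hhom⟩
  · obtain ⟨e, rfl⟩ : ∃ e, d = e + 1 := ⟨d - 1, by omega⟩
    have hrot0 : ∀ j k : Fin N, j ≠ k → rot j k p = 0 := fun j k hjk =>
      homog_in_span hc (by omega) (rot_isHomogeneous hhom j k) (h j k hjk)
    exact key hN (e+1) p hp hhom hrot0
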